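/- arXiv:1706.00063 — 2 statements merged into one kernel-verified Lean document; each statement's English description precedes it below -/
import Mathlib

section
/- Let τ be an n-tuple of permutations in Sₙ with τ₁ = id, and let S, C be real τ-permutative matrices with first rows (s₁,…,sₙ) and (c₁,…,cₙ) satisfying |cᵢ| ≤ sᵢ for all i, and let 0 ≤ γ ≤ 1. Then (1/2)(S + γC) and (1/2)(S − γC) are nonnegative τ-permutative matrices, and the 2n×2n block matrix M_γ with blocks [[ (s_{ij}+γc_{ij})/2, (s_{ij}−γc_{ij})/2 ],[ (s_{ij}−γc_{ij})/2, (s_{ij}+γc_{ij})/2 ]] is a nonnegative permutative matrix whose eigenvalue multiset is σ(S) ∪ γ·σ(C). -/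
open Matrix Polynomial

section Aux

variable {m : Type*} [Fintype m] [DecidableEq m]

lemma my_det_fromBlocks_same {R : Type*} [CommRing R] (P Q : Matrix m m R) :
    (fromBlocks P Q Q P).det = (P + Q).det * (P - Q).det := by
  have key : fromBlocks (1 : Matrix m m R) (1 : Matrix m m R) (0 : Matrix m m R) (1 : Matrix m m R) * fromBlocks P Q Q P * fromBlocks (1 : Matrix m m R) (-1 : Matrix m m R) (0 : Matrix m m R) (1 : Matrix m m R)
      = fromBlocks (P + Q) 0 Q (P - Q) := by
    rw [fromBlocks_multiply, fromBlocks_multiply]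
    congr 1 <;> try noncomm_ring
  have h1 : (fromBlocks (1 : Matrix m m R) (1 : Matrix m m R) (0 : Matrix m m R) (1 : Matrix m m R)).det = 1 := by
    rw [det_fromBlocks_zero₂₁]; simp
  have h2 : (fromBlocks (1 : Matrix m m R) (-1 : Matrix m m R) (0 : Matrix m m R) (1 : Matrix m m R)).det = 1 := by
    rw [det_fromBlocks_zero₂₁]; simp
  have h3 := congrArg Matrix.det key
  rw [det_mul, det_mul, h1, h2, one_mul, mul_one, det_fromBlocks_zero₁₂] at h3
  exact h3

lemma my_charpoly_fromBlocks_same {R : Type*} [CommRing R] (P Q : Matrix m m R) :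
    (fromBlocks P Q Q P).charpoly = (P + Q).charpoly * (P - Q).charpoly := by
  rw [Matrix.charpoly, charmatrix_fromBlocks, my_det_fromBlocks_same]
  congr 1
  · show _ = (charmatrix (P + Q)).det
    congr 1
    simp only [charmatrix, RingHom.mapMatrix_apply]
    ext i j
    simp [Matrix.map_add, Matrix.sub_apply, Matrix.add_apply, Matrix.neg_apply]
    ring
  · show _ = (charmatrix (P - Q)).det
    congr 1
    simp only [charmatrix, RingHom.mapMatrix_apply]
    ext i j
    simp [Matrix.map_sub, Matrix.sub_apply, Matrix.neg_apply]
    ring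

lemma my_eval_charpoly (A : Matrix m m ℂ) (x : ℂ) :
    A.charpoly.eval x = (x • (1 : Matrix m m ℂ) - A).det := by
  have hscal : Matrix.scalar m x = x • (1 : Matrix m m ℂ) := by
    ext i j
    simp [Matrix.scalar_apply, Matrix.diagonal, Matrix.one_apply, mul_ite]
  rw [Matrix.charpoly, eval_det, matPolyEquiv_charmatrix, eval_sub, eval_X, eval_C, hscal]

lemma my_roots_charpoly_smul (g : ℂ) (A : Matrix m m ℂ) :
    (g • A).charpoly.roots = A.charpoly.roots.map (fun r => g * r) := by
  set R := A.charpoly.roots with hR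
  have hsp : A.charpoly = (R.map fun a => X - C a).prod :=
    (IsAlgClosed.splits _).eq_prod_roots_of_monic A.charpoly_monic
  have hcard : Multiset.card R = Fintype.card m := by
    rw [← Matrix.charpoly_natDegree_eq_dim A]
    exact splits_iff_card_roots.mp (IsAlgClosed.splits _)
  have key : (g • A).charpoly = (R.map fun r => X - C (g * r)).prod := by
    apply Polynomial.funext; intro x
    rw [my_eval_charpoly, eval_multiset_prod, Multiset.map_map]
    simp only [Function.comp, eval_sub, eval_X, eval_C]
    by_cases hg : g = 0
    · subst hg
      simp only [zero_mul, sub_zero, zero_smul, sub_zero]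
      rw [Matrix.det_smul, det_one, mul_one, Multiset.map_const', Multiset.prod_replicate, hcard]
    · have hrw : x • (1 : Matrix m m ℂ) - g • A = g • ((x / g) • (1 : Matrix m m ℂ) - A) := by
        rw [smul_sub, smul_smul, mul_div_cancel₀ _ hg]
      rw [hrw, Matrix.det_smul, ← my_eval_charpoly, hsp, eval_multiset_prod, Multiset.map_map]
      simp only [Function.comp, eval_sub, eval_X, eval_C]
      have : (R.map fun r => x - g * r) = R.map fun r => g * (x / g - r) := by
        apply Multiset.map_congr rfl
        intro r _
        field_simp
      rw [this]
      have : (R.map fun r => g * (x / g - r)).prod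
          = (R.map fun _ => g).prod * (R.map fun r => x / g - r).prod := by
        rw [← Multiset.prod_map_mul]
      rw [this, Multiset.map_const', Multiset.prod_replicate, hcard]
  rw [key]
  have : (R.map fun r => X - C (g * r)) = (R.map fun r => g * r).map fun a => X - C a := by
    rw [Multiset.map_map]; rfl
  rw [this, roots_multiset_prod_X_sub_C]

end Aux

def prodSumEquiv (n : ℕ) : Fin n × Fin 2 ≃ (Fin n ⊕ Fin n) where
  toFun := fun x => if x.2 = 0 then Sum.inl x.1 else Sum.inr x.1
  invFun := Sum.elim (fun i => (i, 0)) (fun i => (i, 1))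
  left_inv := by rintro ⟨i, p⟩; fin_cases p <;> simp
  right_inv := by rintro (i | i) <;> simp

@[simp] lemma prodSumEquiv_symm_inl (n : ℕ) (i : Fin n) :
    (prodSumEquiv n).symm (Sum.inl i) = (i, 0) := rfl

@[simp] lemma prodSumEquiv_symm_inr (n : ℕ) (i : Fin n) :
    (prodSumEquiv n).symm (Sum.inr i) = (i, 1) := rfl

/-- for τ-permutative S, C with |cᵢ| ≤ sᵢ and 0 ≤ γ ≤ 1, the matrices
(1/2)(S±γC) are nonnegative and τ-permutative, and the 2n×2n block matrix M_γ is a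
nonnegative permutative matrix with eigenvalue multiset σ(S) ∪ γ·σ(C). -/
theorem stmt9 (n : ℕ) (hn : 0 < n) (τ : Fin n → Equiv.Perm (Fin n))
    (hτ : τ ⟨0, hn⟩ = 1) (s c : Fin n → ℝ)
    (S C : Matrix (Fin n) (Fin n) ℝ)
    (hS : ∀ i j, S i j = s (τ i j)) (hC : ∀ i j, C i j = c (τ i j))
    (h : ∀ i, |c i| ≤ s i) (γ : ℝ) (h0 : 0 ≤ γ) (h1 : γ ≤ 1)
    (M : Matrix (Fin n × Fin 2) (Fin n × Fin 2) ℝ)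
    (hM : ∀ (i j : Fin n) (p q : Fin 2), M (i, p) (j, q) =
      if p = q then (S i j + γ * C i j) / 2 else (S i j - γ * C i j) / 2) :
    (∀ i j, 0 ≤ ((1 / 2 : ℝ) • (S + γ • C)) i j) ∧
    (∀ i j, 0 ≤ ((1 / 2 : ℝ) • (S - γ • C)) i j) ∧
    (∃ a : Fin n → ℝ, ∀ i j, ((1 / 2 : ℝ) • (S + γ • C)) i j = a (τ i j)) ∧
    (∃ a : Fin n → ℝ, ∀ i j, ((1 / 2 : ℝ) • (S - γ • C)) i j = a (τ i j)) ∧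
    (∀ u v, 0 ≤ M u v) ∧
    (∀ u : Fin n × Fin 2, ∃ π : Equiv.Perm (Fin n × Fin 2),
      ∀ v, M u v = M (⟨0, hn⟩, 0) (π v)) ∧
    (M.map Complex.ofReal).charpoly.roots =
      (S.map Complex.ofReal).charpoly.roots +
        Multiset.map (fun z => (γ : ℂ) * z)
          ((C.map Complex.ofReal).charpoly.roots) := by
  have habs : ∀ i, 0 ≤ s i + γ * c i ∧ 0 ≤ s i - γ * c i := by
    intro i
    obtain ⟨ha, hb⟩ := abs_le.mp (h i)
    constructor <;> nlinarith
  refine ⟨?_, ?_, ?_, ?_, ?_, ?_, ?_⟩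
  · intro i j
    have := (habs (τ i j)).1
    simp only [Matrix.smul_apply, Matrix.add_apply, Matrix.smul_apply, smul_eq_mul, hS, hC]
    linarith
  · intro i j
    have := (habs (τ i j)).2
    simp only [Matrix.smul_apply, Matrix.sub_apply, Matrix.smul_apply, smul_eq_mul, hS, hC]
    linarith
  · exact ⟨fun k => (1 / 2) * (s k + γ * c k), fun i j => by
      simp only [Matrix.smul_apply, Matrix.add_apply, smul_eq_mul, hS, hC]⟩
  · exact ⟨fun k => (1 / 2) * (s k - γ * c k), fun i j => by
      simp only [Matrix.smul_apply, Matrix.sub_apply, smul_eq_mul, hS, hC]⟩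
  · rintro ⟨i, p⟩ ⟨j, q⟩
    rw [hM]
    have h1 := (habs (τ i j)).1
    have h2 := (habs (τ i j)).2
    split_ifs <;> rw [hS, hC] <;> linarith
  · rintro ⟨i, p⟩
    refine ⟨Equiv.prodCongr (τ i) (if p = 0 then Equiv.refl (Fin 2) else Equiv.swap 0 1), ?_⟩
    rintro ⟨j, q⟩
    have hτ' : ∀ k, τ ⟨0, hn⟩ k = k := by intro k; rw [hτ]; rfl
    fin_cases p <;> fin_cases q <;>
      simp [hM, hS, hC, hτ', Equiv.swap_apply_left, Equiv.swap_apply_right]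
  · -- the eigenvalue statement
    set A : Matrix (Fin n) (Fin n) ℂ :=
      Matrix.of (fun i j => (((S i j + γ * C i j) / 2 : ℝ) : ℂ)) with hA
    set B : Matrix (Fin n) (Fin n) ℂ :=
      Matrix.of (fun i j => (((S i j - γ * C i j) / 2 : ℝ) : ℂ)) with hB
    have hre : reindex (prodSumEquiv n) (prodSumEquiv n) (M.map Complex.ofReal)
        = fromBlocks A B B A := by
      ext (i | i) (j | j) <;>
        simp [Matrix.reindex_apply, Matrix.submatrix_apply, Matrix.map_apply, hM, hA, hB,
          show (1 : Fin 2) ≠ 0 by decide]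
    have hcp : (M.map Complex.ofReal).charpoly
        = (S.map Complex.ofReal).charpoly * ((γ : ℂ) • C.map Complex.ofReal).charpoly := by
      rw [← Matrix.charpoly_reindex (prodSumEquiv n) (M.map Complex.ofReal), hre,
        my_charpoly_fromBlocks_same]
      congr 1
      · congr 1
        ext i j
        simp only [Matrix.add_apply, hA, hB, Matrix.of_apply, Matrix.map_apply]
        push_cast
        ring
      · congr 1
        ext i j
        simp only [Matrix.sub_apply, Matrix.smul_apply, hA, hB, Matrix.of_apply,
          Matrix.map_apply, smul_eq_mul]
        push_cast
        ring
    rw [hcp, Polynomial.roots_mul (mul_ne_zero (Matrix.charpoly_monic _).ne_zero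
      (Matrix.charpoly_monic _).ne_zero), my_roots_charpoly_smul]
end

section
/- Let K be an algebraically closed field of characteristic 0 and let A be a (2n+1)×(2n+1) matrix partitioned so that for 1 ≤ i,j ≤ n the (i,j) block is the 2×2 symmetric matrix [[a_{ij}, b_{ij}],[b_{ij}, a_{ij}]], the (i, n+1) block is the column (a_{i,n+1}, a_{i,n+1})ᵀ, the (n+1, j) block is the row (a_{n+1,j}, b_{n+1,j}), and the (n+1, n+1) entry is a_{n+1,n+1}. Define the (n+1)×(n+1) matrix S by s_{ij} = a_{ij}+b_{ij} for 1 ≤ i,j ≤ n, s_{i,n+1} = a_{i,n+1}, s_{n+1,j} = a_{n+1,j}+b_{n+1,j}, s_{n+1,n+1} = a_{n+1,n+1}, and the n×n matrix C by c_{ij} = a_{ij} − b_{ij}. Then the eigenvalue multiset of A equals the union of the eigenvalue multisets of S and C. -/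
open Matrix Polynomial

section stmt11helpers

lemma charpoly_conj_aux {R m : Type*} [CommRing R] [Fintype m] [DecidableEq m]
    (P Q M : Matrix m m R) (hPQ : P * Q = 1) :
    (P * M * Q).charpoly = M.charpoly := by
  have hmap : ∀ N N' : Matrix m m R, (N * N').map Polynomial.C
      = N.map Polynomial.C * N'.map Polynomial.C := fun N N' =>
    Matrix.map_mul
  have hmat : charmatrix (P * M * Q) =
      P.map Polynomial.C * charmatrix M * Q.map Polynomial.C := by
    rw [charmatrix, charmatrix]
    simp only [RingHom.mapMatrix_apply, mul_sub, sub_mul]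
    congr 1
    · have hc : P.map Polynomial.C * Matrix.scalar m (X : R[X])
          = Matrix.scalar m (X : R[X]) * P.map Polynomial.C :=
        (scalar_commute (X : R[X]) (fun r => Commute.all _ r) (P.map Polynomial.C)).symm
      rw [hc, mul_assoc, ← hmap, hPQ]
      simp
    · rw [← hmap, ← hmap]
  rw [Matrix.charpoly, hmat, det_mul, det_mul, Matrix.charpoly]
  have h1 : P.map Polynomial.C * Q.map Polynomial.C = 1 := by
    rw [← hmap, hPQ]; simp
  have := congrArg Matrix.det h1
  rw [det_mul] at this
  simp at this
  rw [mul_comm (P.map Polynomial.C).det _, mul_assoc, this, mul_one]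

def stmt11Equiv (n : ℕ) : (Fin n × Fin 2 ⊕ Unit) ≃ (Fin (n + 1) ⊕ Fin n) where
  toFun x := match x with
    | Sum.inl (i, p) => if p = 0 then Sum.inl i.castSucc else Sum.inr i
    | Sum.inr _ => Sum.inl (Fin.last n)
  invFun y := match y with
    | Sum.inl i => if h : i = Fin.last n then Sum.inr () else Sum.inl (i.castPred h, 0)
    | Sum.inr k => Sum.inl (k, 1)
  left_inv := by
    rintro (⟨i, p⟩ | ⟨⟩)
    · fin_cases p <;>
        simp [Fin.castSucc_lt_last, (Fin.castSucc_lt_last i).ne]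
    · simp
  right_inv := by
    rintro (i | k)
    · by_cases h : i = Fin.last n <;> simp [h]
    · simp

lemma stmt11Equiv_symm_inl {n : ℕ} (i : Fin (n + 1)) :
    (stmt11Equiv n).symm (Sum.inl i)
      = if h : i = Fin.last n then Sum.inr () else Sum.inl (i.castPred h, 0) := rfl

lemma stmt11Equiv_symm_inr {n : ℕ} (k : Fin n) :
    (stmt11Equiv n).symm (Sum.inr k) = Sum.inl (k, 1) := rfl

lemma sum_castSucc_ite {K : Type*} [AddCommMonoid K] {n : ℕ} (m : Fin (n + 1))
    (f : Fin n → K) :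
    (∑ k : Fin n, if m = k.castSucc then f k else 0)
      = if h : m = Fin.last n then 0 else f (m.castPred h) := by
  by_cases h : m = Fin.last n
  · rw [dif_pos h]
    apply Finset.sum_eq_zero
    intro k _
    rw [if_neg]
    rw [h]
    exact (Fin.castSucc_lt_last k).ne'
  · rw [dif_neg h]
    rw [Finset.sum_eq_single (m.castPred h)]
    · simp
    · intro k _ hk
      rw [if_neg]
      intro hmk
      exact hk (by simp [hmk])
    · simp

end stmt11helpers

/-- odd-order block decomposition: σ(A) = σ(S) ∪ σ(C), i.e.
char(A) = char(S)·char(C). -/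
theorem stmt11 (K : Type*) [Field K] [IsAlgClosed K] [CharZero K] (n : ℕ)
    (a : Fin (n + 1) → Fin (n + 1) → K) (b : Fin (n + 1) → Fin n → K)
    (A : Matrix (Fin n × Fin 2 ⊕ Unit) (Fin n × Fin 2 ⊕ Unit) K)
    (hA1 : ∀ (i j : Fin n) (p q : Fin 2),
      A (Sum.inl (i, p)) (Sum.inl (j, q)) =
        if p = q then a i.castSucc j.castSucc else b i.castSucc j)
    (hA2 : ∀ (i : Fin n) (p : Fin 2) (u : Unit),
      A (Sum.inl (i, p)) (Sum.inr u) = a i.castSucc (Fin.last n))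
    (hA3 : ∀ (u : Unit) (j : Fin n) (q : Fin 2),
      A (Sum.inr u) (Sum.inl (j, q)) =
        if q = 0 then a (Fin.last n) j.castSucc else b (Fin.last n) j)
    (hA4 : ∀ u v : Unit, A (Sum.inr u) (Sum.inr v) = a (Fin.last n) (Fin.last n))
    (S : Matrix (Fin (n + 1)) (Fin (n + 1)) K)
    (hS1 : ∀ (i : Fin (n + 1)) (j : Fin n),
      S i j.castSucc = a i j.castSucc + b i j)
    (hS2 : ∀ i, S i (Fin.last n) = a i (Fin.last n))
    (C : Matrix (Fin n) (Fin n) K)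
    (hC : ∀ i j, C i j = a i.castSucc j.castSucc - b i.castSucc j) :
    A.charpoly = S.charpoly * C.charpoly := by
  classical
  have half : (2 : K)⁻¹ + (2 : K)⁻¹ = 1 := by
    rw [← two_mul]
    field_simp
  set B11 : Matrix (Fin (n + 1)) (Fin (n + 1)) K := fun i j => a i j with hB11
  set B12 : Matrix (Fin (n + 1)) (Fin n) K := fun i k => b i k with hB12
  set B21 : Matrix (Fin n) (Fin (n + 1)) K := fun m j =>
    if h : j = Fin.last n then a m.castSucc (Fin.last n)
    else b m.castSucc (j.castPred h) with hB21
  set B22 : Matrix (Fin n) (Fin n) K := fun m k => a m.castSucc k.castSucc with hB22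
  set T : Matrix (Fin (n + 1)) (Fin n) K := fun m k =>
    if m = Fin.last n then a (Fin.last n) k.castSucc - b (Fin.last n) k else 0 with hT
  set P12 : Matrix (Fin (n + 1)) (Fin n) K := fun i k =>
    if i = k.castSucc then 1 else 0 with hP12
  set P21 : Matrix (Fin n) (Fin (n + 1)) K := fun m i =>
    if i = m.castSucc then 1 else 0 with hP21
  set Q11 : Matrix (Fin (n + 1)) (Fin (n + 1)) K := fun m i =>
    if m = i then (if i = Fin.last n then 1 else (2 : K)⁻¹) else 0 with hQ11
  set Q12 : Matrix (Fin (n + 1)) (Fin n) K := fun m k =>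
    if m = k.castSucc then (2 : K)⁻¹ else 0 with hQ12
  set Q21 : Matrix (Fin n) (Fin (n + 1)) K := fun m i =>
    if i = m.castSucc then (2 : K)⁻¹ else 0 with hQ21
  set P : Matrix (Fin (n + 1) ⊕ Fin n) (Fin (n + 1) ⊕ Fin n) K :=
    fromBlocks 1 P12 P21 (-1) with hP
  set Q : Matrix (Fin (n + 1) ⊕ Fin n) (Fin (n + 1) ⊕ Fin n) K :=
    fromBlocks Q11 Q12 Q21 (-((2 : K)⁻¹) • 1) with hQ
  set M : Matrix (Fin (n + 1) ⊕ Fin n) (Fin (n + 1) ⊕ Fin n) K :=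
    fromBlocks S T 0 C with hM
  have hPQ : P * Q = 1 := by
    rw [hP, hQ, fromBlocks_multiply, ← fromBlocks_one, fromBlocks_inj]
    refine ⟨?_, ?_, ?_, ?_⟩
    · -- 1 * Q11 + P12 * Q21 = 1
      rw [Matrix.one_mul]
      ext m i
      simp only [Matrix.add_apply, Matrix.mul_apply, Matrix.one_apply]
      simp only [hP12, hQ21, ite_mul, one_mul,
        zero_mul, sum_castSucc_ite, hQ11, Matrix.one_apply]
      by_cases hm : m = Fin.last n
      · subst hm
        simp only [dif_pos, add_zero]
        by_cases hi : Fin.last n = i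
        · subst hi; simp
        · simp [hi]
      · rw [dif_neg hm, Fin.castSucc_castPred]
        by_cases hmi : m = i
        · subst hmi; simp [hm, half]
        · simp [hmi, Ne.symm hmi]
    · -- 1 * Q12 + P12 * (-(2⁻¹) • 1) = 0
      rw [Matrix.one_mul, Matrix.mul_smul, Matrix.mul_one]
      ext m k
      simp only [Matrix.add_apply, Matrix.smul_apply, smul_eq_mul, Matrix.zero_apply]
      simp only [hQ12, hP12, smul_eq_mul,
        Matrix.zero_apply]
      by_cases h : m = k.castSucc <;> simp [h]
    · -- P21 * Q11 + (-1) * Q21 = 0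
      rw [Matrix.neg_mul, Matrix.one_mul]
      ext m i
      simp only [Matrix.add_apply, Matrix.neg_apply, Matrix.mul_apply, Matrix.zero_apply]
      simp only [hP21, hQ11, hQ21,
        ite_mul, one_mul, zero_mul, Fintype.sum_ite_eq', Matrix.zero_apply]
      by_cases h : m.castSucc = i
      · subst h
        simp [(Fin.castSucc_lt_last m).ne]
      · simp [h, Ne.symm h]
    · -- P21 * Q12 + (-1) * (-(2⁻¹) • 1) = 1
      rw [Matrix.neg_mul, Matrix.one_mul, neg_smul, neg_neg]
      ext m k
      simp only [Matrix.add_apply, Matrix.mul_apply, Matrix.smul_apply, Matrix.one_apply]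
      simp only [hP21, hQ12, ite_mul, one_mul,
        zero_mul, Fintype.sum_ite_eq', Matrix.smul_apply, Matrix.one_apply, smul_eq_mul,
        Fin.castSucc_inj]
      by_cases h : m = k <;> simp [h, half]
  have hBeq : Matrix.reindex (stmt11Equiv n) (stmt11Equiv n) A
      = fromBlocks B11 B12 B21 B22 := by
    ext x y
    rcases x with i | m <;> rcases y with j | k <;>
      simp only [reindex_apply, submatrix_apply, stmt11Equiv_symm_inl, stmt11Equiv_symm_inr,
        fromBlocks_apply₁₁, fromBlocks_apply₁₂, fromBlocks_apply₂₁, fromBlocks_apply₂₂] <;>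
      simp only [hB11, hB12, hB21, hB22]
    · by_cases hi : i = Fin.last n <;> by_cases hj : j = Fin.last n <;>
        simp [hi, hj, hA1, hA2, hA3, hA4, Fin.castSucc_castPred]
    · by_cases hi : i = Fin.last n <;>
        simp [hi, hA1, hA3, Fin.castSucc_castPred]
    · by_cases hj : j = Fin.last n <;>
        simp [hj, hA1, hA2, Fin.castSucc_castPred]
    · simp [hA1]
  have hBP : fromBlocks B11 B12 B21 B22 * P = P * M := by
    rw [hP, hM, fromBlocks_multiply, fromBlocks_multiply, fromBlocks_inj]
    refine ⟨?_, ?_, ?_, ?_⟩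
    · -- B11 * 1 + B12 * P21 = 1 * S + P12 * 0
      rw [Matrix.mul_one, Matrix.one_mul, Matrix.mul_zero, add_zero]
      ext i j
      simp only [Matrix.add_apply, Matrix.mul_apply]
      simp only [hB11, hB12, hP21, mul_ite, mul_one,
        mul_zero, sum_castSucc_ite]
      by_cases hj : j = Fin.last n
      · subst hj
        rw [dif_pos rfl, add_zero, hS2]
      · rw [dif_neg hj]
        have h := hS1 i (j.castPred hj)
        rw [Fin.castSucc_castPred] at h
        rw [h]
    · -- B11 * P12 + B12 * (-1) = 1 * T + P12 * C
      rw [Matrix.mul_neg, Matrix.mul_one, Matrix.one_mul]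
      ext i k
      simp only [Matrix.add_apply, Matrix.neg_apply, Matrix.mul_apply]
      simp only [hB11, hB12, hP12,
        mul_ite, mul_one, mul_zero, ite_mul, one_mul, zero_mul, Fintype.sum_ite_eq',
        sum_castSucc_ite]
      by_cases hi : i = Fin.last n
      · subst hi
        rw [dif_pos rfl, add_zero, hT]
        simp [sub_eq_add_neg]
      · rw [dif_neg hi, hT]
        have h := hC (i.castPred hi) k
        rw [Fin.castSucc_castPred] at h
        simp only [if_neg hi]
        rw [h, zero_add]
        ring
    · -- B21 * 1 + B22 * P21 = P21 * S + (-1) * 0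
      rw [Matrix.mul_one, Matrix.mul_zero, add_zero]
      ext m j
      simp only [Matrix.add_apply, Matrix.mul_apply]
      simp only [hB21, hB22, hP21, mul_ite, mul_one,
        mul_zero, ite_mul, one_mul, zero_mul, Fintype.sum_ite_eq', sum_castSucc_ite]
      by_cases hj : j = Fin.last n
      · subst hj
        rw [dif_pos rfl, dif_pos rfl, add_zero, hS2]
      · rw [dif_neg hj, dif_neg hj]
        have h := hS1 m.castSucc (j.castPred hj)
        rw [Fin.castSucc_castPred] at h
        rw [h, Fin.castSucc_castPred]
        ring
    · -- B21 * P12 + B22 * (-1) = P21 * T + (-1) * C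
      rw [Matrix.mul_neg, Matrix.mul_one, Matrix.neg_mul, Matrix.one_mul]
      ext m k
      simp only [Matrix.add_apply, Matrix.neg_apply, Matrix.mul_apply]
      simp only [hP12, hP21,
        mul_ite, mul_one, mul_zero, ite_mul, one_mul, zero_mul, Fintype.sum_ite_eq']
      rw [hB21, hB22, hT, hC]
      simp only [dif_neg (Fin.castSucc_lt_last k).ne, if_neg (Fin.castSucc_lt_last m).ne,
        Fin.castPred_castSucc]
      ring
  have hBfact : fromBlocks B11 B12 B21 B22 = P * M * Q := by
    calc fromBlocks B11 B12 B21 B22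
        = fromBlocks B11 B12 B21 B22 * (P * Q) := by rw [hPQ, mul_one]
      _ = (fromBlocks B11 B12 B21 B22 * P) * Q := by rw [mul_assoc]
      _ = P * M * Q := by rw [hBP]
  calc A.charpoly
      = (Matrix.reindex (stmt11Equiv n) (stmt11Equiv n) A).charpoly :=
        (Matrix.charpoly_reindex (stmt11Equiv n) A).symm
    _ = (P * M * Q).charpoly := by rw [hBeq, hBfact]
    _ = M.charpoly := charpoly_conj_aux P Q M hPQ
    _ = S.charpoly * C.charpoly := by rw [hM, Matrix.charpoly_fromBlocks_zero₂₁]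
end
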